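/- Let {1, …, J} be partitioned into disjoint sets A_L, A, A_R with A ≠ ∅, let F be defined by F_i(z, u) = 0 for i ∈ A_L, F_i(z, u) = z_i − (∑_{j∈A} z_j + ∑_{j∈A_R} u_j − 1)/|A| for i ∈ A, and F_i(z, u) = u_i for i ∈ A_R, and let dα ∈ ℝ^J be any vector. Then for every j ∈ {1, …, J}, the adjoint Jacobian–vector product with respect to z satisfies ∑_{i=1}^J (∂F_i/∂z_j)·dα_i = 𝟙(j ∈ A)·(dα_j − m), where m = (1/|A|) ∑_{i∈A} dα_i and 𝟙 denotes the indicator. -/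

import Mathlib

open Finset in
/-- Adjoint Jacobian–vector product of the local closed form `F` of constrained
sparsemax with respect to `z`: `∑_i (∂F_i/∂z_j)·dα_i = 𝟙(j ∈ A)(dα_j − m)`,
where `m = (1/|A|) ∑_{i∈A} dα_i`. The left-hand side is expressed as the
derivative of `t ↦ ∑_i F_i(update z j t, u) · dα_i` at `z j`. -/
theorem csparsemax_backprop_z (J : ℕ) (AL A AR : Finset (Fin J))
    (hLA : Disjoint AL A) (hLR : Disjoint AL AR) (hAR : Disjoint A AR)
    (hcover : AL ∪ A ∪ AR = Finset.univ) (hA : A.Nonempty)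
    (F : (Fin J → ℝ) → (Fin J → ℝ) → Fin J → ℝ)
    (hF : ∀ z u i, F z u i =
      if i ∈ AL then 0
      else if i ∈ A then
        z i - ((∑ j ∈ A, z j) + (∑ j ∈ AR, u j) - 1) / (A.card : ℝ)
      else u i)
    (dα : Fin J → ℝ) (z u : Fin J → ℝ) (j : Fin J) :
    HasDerivAt (fun t : ℝ => ∑ i, F (Function.update z j t) u i * dα i)
      (if j ∈ A then dα j - (∑ i ∈ A, dα i) / (A.card : ℝ) else 0) (z j) := by
  have hcard : (A.card : ℝ) ≠ 0 := Nat.cast_ne_zero.mpr (Finset.card_ne_zero.mpr hA)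
  have key : HasDerivAt (fun t : ℝ => ∑ i, F (Function.update z j t) u i * dα i)
      (∑ i : Fin J, (if i ∈ A then ((if i = j then (1:ℝ) else 0)
        - (if j ∈ A then ((A.card : ℝ))⁻¹ else 0)) * dα i else 0)) (z j) := by
    apply HasDerivAt.fun_sum
    intro i _
    simp only [hF]
    by_cases hiL : i ∈ AL
    · have hiA : i ∉ A := Finset.disjoint_left.mp hLA hiL
      simp only [if_pos hiL, if_neg hiA, zero_mul]
      exact hasDerivAt_const _ 0
    · by_cases hiA : i ∈ A
      · simp only [if_neg hiL, if_pos hiA]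
        have h1 : HasDerivAt (fun t : ℝ => Function.update z j t i)
            (if i = j then (1:ℝ) else 0) (z j) := by
          by_cases hij : i = j
          · subst hij
            simp only [Function.update_self, if_pos rfl]
            exact hasDerivAt_id (z i)
          · simp only [Function.update_apply, if_neg hij]
            exact hasDerivAt_const _ _
        have h2 : HasDerivAt (fun t : ℝ => ∑ k ∈ A, Function.update z j t k)
            (if j ∈ A then (1:ℝ) else 0) (z j) := by
          by_cases hjA : j ∈ A
          · have hs : ∀ t : ℝ, ∑ k ∈ A, Function.update z j t k
                = t + ∑ k ∈ A \ {j}, z k := fun t => Finset.sum_update_of_mem hjA z t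
            simp only [hs, if_pos hjA]
            exact (hasDerivAt_id (z j)).add_const _
          · have hs : ∀ t : ℝ, ∑ k ∈ A, Function.update z j t k = ∑ k ∈ A, z k :=
              fun t => Finset.sum_update_of_notMem hjA z t
            simp only [hs, if_neg hjA]
            exact hasDerivAt_const _ _
        have h3 := ((h1.fun_sub ((((h2.add_const (∑ k ∈ AR, u k)).sub_const 1)).div_const
          (A.card : ℝ))).mul_const (dα i))
        convert h3 using 2
        · rfl
        · by_cases hjA : j ∈ A <;> simp [hjA, div_eq_mul_inv]
      · simp only [if_neg hiL, if_neg hiA]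
        exact hasDerivAt_const _ _
  convert key using 1
  rw [Finset.sum_ite_mem, Finset.univ_inter]
  simp only [sub_mul, Finset.sum_sub_distrib]
  simp only [ite_mul, one_mul, zero_mul, Finset.sum_ite_eq' A j dα]
  by_cases hjA : j ∈ A
  · simp [hjA, div_eq_mul_inv, Finset.sum_mul, mul_comm]
  · simp [hjA]
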